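/- There exists a free submodule C ⊆ M of rank equal to rk(M) such that CV ∩ F = MV ∩ F (as submodules of F), and moreover ord_R(det(C)) = ord_R(M), where det(C) is the determinant of a matrix expressing a basis of C in a basis of F. -/

import Mathlib

open IsLocalRing Pointwise

set_option synthInstance.maxHeartbeats 1000000
set_option maxHeartbeats 4000000

/-! Preliminary definitions: lengths, orders, order valuation rings, spans over
intermediate rings, ideals of minors, quadratic transforms, Buchsbaum-Rim
multiplicity. -/

/-- The length of a module, as the Krull dimension of its lattice of submodules
(`⊤` if the module is not of finite length). -/
noncomputable def modLength (R M : Type*) [Ring R] [AddCommGroup M] [Module R M] : ℕ∞ :=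
  (Order.krullDim (Submodule R M)).unbotD 0

/-- The order of an ideal `I` with respect to the filtration by powers of `mA`:
the largest `n` with `I ≤ mA ^ n`. -/
noncomputable def ordWrt {A : Type*} [CommRing A] (mA : Ideal A) (I : Ideal A) : ℕ∞ :=
  ⨆ n ∈ {n : ℕ | I ≤ mA ^ n}, (n : ℕ∞)

/-- The order of an element with respect to the filtration by powers of `mA`. -/
noncomputable def ordElemWrt {A : Type*} [CommRing A] (mA : Ideal A) (a : A) : ℕ∞ :=
  ordWrt mA (Ideal.span {a})

section OrderVal

variable (R K : Type*) [CommRing R] [Field K] [Algebra R K]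

/-- `V` is the valuation ring in `K` of the `m`-adic order valuation of the local
ring `R`: it consists of the fractions `a/b` with `ord_R a ≥ ord_R b`. -/
def IsOrderValRing [IsLocalRing R] (V : Subalgebra R K) : Prop :=
  ∀ k : K, k ∈ V ↔ ∃ a b : R, b ≠ 0 ∧ k * algebraMap R K b = algebraMap R K a ∧
    ordElemWrt (maximalIdeal R) b ≤ ordElemWrt (maximalIdeal R) a

/-- `V` is the order valuation ring (inside `K`) of the local subring `A ⊆ K`,
whose maximal ideal (= set of nonunits) is `mA`. -/
def IsOrderValRingOf (A V : Subalgebra R K) : Prop :=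
  ∃ mA : Ideal ↥A, (∀ a : ↥A, a ∈ mA ↔ ¬IsUnit a) ∧
    ∀ k : K, k ∈ V ↔ ∃ a b : ↥A, b ≠ 0 ∧ k * (b : K) = (a : K) ∧
      ordElemWrt mA b ≤ ordElemWrt mA a

/-- `V'` is a discrete valuation ring (a local principal ideal domain that is
not a field; being a subring of the field `K` it is automatically a domain). -/
def IsDVRSubalg (V' : Subalgebra R K) : Prop :=
  IsPrincipalIdealRing ↥V' ∧ IsLocalRing ↥V' ∧ ¬IsField ↥V'

/-- The subalgebra `S = R[m/x]` of `K`: its elements are the fractions `a/xⁿ`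
with `a ∈ mⁿ`. -/
def IsMxAlgebra [IsLocalRing R] (x : R) (S : Subalgebra R K) : Prop :=
  (S : Set K) = {k : K | ∃ (n : ℕ) (a : R), a ∈ maximalIdeal R ^ n ∧
    k * algebraMap R K x ^ n = algebraMap R K a}

/-- `B` is a first quadratic transform of the local subring `A` of `K`:
`B` is the localization of `S = A[m_A/x]` (for some minimal generator `x` of the
maximal ideal `m_A` of `A`) at a maximal ideal `Q` containing `m_A·S`, all
realized as subrings of `K`. -/
def IsFQT (A B : Subalgebra R K) : Prop :=
  ∃ mA : Ideal ↥A, (∀ a : ↥A, a ∈ mA ↔ ¬IsUnit a) ∧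
  ∃ x : ↥A, x ∈ mA ∧ x ∉ mA ^ 2 ∧
  ∃ S : Subalgebra R K,
    (S : Set K) = {k : K | ∃ (n : ℕ) (a : ↥A), a ∈ mA ^ n ∧ k * (x : K) ^ n = (a : K)} ∧
  ∃ Q : Ideal ↥S, Q.IsMaximal ∧
    (∀ (s : ↥S) (a : ↥A), a ∈ mA → (s : K) = (a : K) → s ∈ Q) ∧
    (B : Set K) = {k : K | ∃ s t : ↥S, t ∉ Q ∧ k * (t : K) = (s : K)}

/-- `T` is a quadratic transform of `R`: there is a finite chain
`R = T₀ ⊆ T₁ ⊆ ⋯ ⊆ Tₙ = T` of subrings of `K` in which each `T_{i+1}` is a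
first quadratic transform of `T_i`.  (`⊥ : Subalgebra R K` is the image of `R`.) -/
def IsQuadTransform (T : Subalgebra R K) : Prop :=
  ∃ (n : ℕ) (c : ℕ → Subalgebra R K), c 0 = ⊥ ∧ c n = T ∧
    ∀ i < n, IsFQT R K (c i) (c (i + 1))

/-- The residue field extension degree `[T : R] = d`: the residue field of the
local ring `T` (with maximal ideal `mT` = its nonunits) has a basis of `d`
elements over the image of `R`. -/
def IsResidueDegree (T : Subalgebra R K) (d : ℕ) : Prop :=
  ∃ mT : Ideal ↥T, (∀ a : ↥T, a ∈ mT ↔ ¬IsUnit a) ∧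
  ∃ f : Fin d → (↥T ⧸ mT),
    (∀ z : ↥T ⧸ mT, ∃ c : Fin d → R,
      z = ∑ i, Ideal.Quotient.mk mT (algebraMap R ↥T (c i)) * f i) ∧
    (∀ c : Fin d → R, ∑ i, Ideal.Quotient.mk mT (algebraMap R ↥T (c i)) * f i = 0 →
      ∀ i, Ideal.Quotient.mk mT (algebraMap R ↥T (c i)) = 0)

end OrderVal

section Modules

variable (R K : Type*) [CommRing R] [Field K] [Algebra R K]
variable (W : Type*) [AddCommGroup W] [Module K W] [Module R W] [IsScalarTower R K W]

/-- `vSpan V N` is the `V`-submodule `N·V` of the `K`-vector space `W` generated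
by the `R`-submodule `N`, for a subring `V` of `K` containing `R`
(recorded as an `R`-submodule of `W`). -/
def vSpan (V : Subalgebra R K) (N : Submodule R W) : Submodule R W :=
  Submodule.span R {w : W | ∃ v ∈ V, ∃ x ∈ N, w = v • x}

/-- `λ_R(P/N)`, the length over `R` of the subquotient `P/N`. -/
noncomputable def lamSub (N P : Submodule R W) : ℕ∞ :=
  modLength R (↥P ⧸ Submodule.comap P.subtype N)

/-- `λ_T(P/N)`, the length of the subquotient `P/N` of `W` as a module over the
subring `T` of `K` (the `T`-module structure on `W` comes from the `K`-vector
space structure; `N` and `P` are replaced by the `T`-submodules they generate). -/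
noncomputable def lamOver (T : Subalgebra R K) (N P : Submodule R W) : ℕ∞ :=
  letI : Module ↥T W := Module.compHom W (algebraMap ↥T K)
  modLength ↥T
    (↥(Submodule.span ↥T (P : Set W)) ⧸
      Submodule.comap (Submodule.span ↥T (P : Set W)).subtype (Submodule.span ↥T (N : Set W)))

/-- `f` is a (finite) basis of the `R`-submodule `N` of `W` as a module over the
subring `T` of `K`. -/
def IsBasisOver (T : Subalgebra R K) (N : Submodule R W) {n : ℕ} (f : Fin n → W) : Prop :=
  (∀ i, f i ∈ N) ∧
  (∀ w ∈ N, ∃ t : Fin n → K, (∀ i, t i ∈ T) ∧ w = ∑ i, t i • f i) ∧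
  (∀ t : Fin n → K, (∀ i, t i ∈ T) → ∑ i, t i • f i = 0 → ∀ i, t i = 0)

/-- The (`R`-sub)module `N` of `W` is free as a module over the subring `T ⊆ K`. -/
def IsFreeOver (T : Subalgebra R K) (N : Submodule R W) : Prop :=
  ∃ (n : ℕ) (f : Fin n → W), IsBasisOver R K W T N f

/-- `G` is (the image in `W` of) the double dual over `T` of the `T`-module `NT`
generated by `N`: it is a free `T`-module containing `NT` with quotient of
finite length over `T`.  These properties characterise the double dual. -/
def IsDoubleDualOver (T : Subalgebra R K) (N G : Submodule R W) : Prop :=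
  vSpan R K W T N ≤ G ∧ (∀ t ∈ T, ∀ w ∈ G, t • w ∈ G) ∧ IsFreeOver R K W T G ∧
    lamOver R K W T (vSpan R K W T N) G ≠ ⊤

/-- The ideal of minors `I_F(M)` of a submodule `M` of a free module `F` with
basis `b`: the ideal generated by the determinants of all square matrices of
coordinates of elements of `M`. -/
noncomputable def minorsIdeal {ι : Type*} [Fintype ι] [DecidableEq ι]
    {M F : Submodule R W} (hMF : M ≤ F) (b : Module.Basis ι R ↥F) : Ideal R :=
  Ideal.span {d : R | ∃ v : ι → ↥M,
    d = Matrix.det (Matrix.of fun i j => b.repr ⟨(v j : W), hMF (v j).2⟩ i)}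

/-- The determinant of a matrix expressing the basis `c` of `C` in the basis `b`
of `F`, for free submodules `C ≤ F` of equal rank. -/
noncomputable def detIn {ι : Type*} [Fintype ι] [DecidableEq ι]
    {C F : Submodule R W} (hCF : C ≤ F) (c : Module.Basis ι R ↥C) (b : Module.Basis ι R ↥F) : R :=
  Matrix.det (Matrix.of fun i j => b.repr ⟨((c j : ↥C) : W), hCF (c j).2⟩ i)

/-- The colon submodule `(N :_P I) = {w ∈ P : I·w ⊆ N}`. -/
def colonIn (N P : Submodule R W) (I : Ideal R) : Submodule R W where
  carrier := {w : W | w ∈ P ∧ ∀ a ∈ I, a • w ∈ N}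
  add_mem' := by
    rintro w w' ⟨hwP, hw⟩ ⟨hw'P, hw'⟩
    exact ⟨P.add_mem hwP hw'P, fun a ha => by
      rw [smul_add]; exact N.add_mem (hw a ha) (hw' a ha)⟩
  zero_mem' := ⟨P.zero_mem, fun a _ => by rw [smul_zero]; exact N.zero_mem⟩
  smul_mem' := by
    rintro r w ⟨hwP, hw⟩
    exact ⟨P.smul_mem r hwP, fun a ha => by
      rw [smul_comm]; exact N.smul_mem r (hw a ha)⟩

end Modules

section BR

variable (A : Type*) [CommRing A] (ι : Type*) [Fintype ι]

/-- The `n`-th ingredient of the Buchsbaum-Rim function: `λ_A(Symₙ(F)/Sₙ(M))`,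
where `F` is free with basis `ι` (so that `Sym(F)` is the polynomial ring
`A[Xᵢ]`, `Symₙ(F)` its homogeneous component of degree `n`), `M` is the
submodule of `F` whose elements have coordinate vectors `L`, and `Sₙ(M)` is the
`A`-span of all products of `n` linear forms with coefficient vectors in `L`
(i.e. the image of `Symₙ(M)` in `Symₙ(F)`). -/
noncomputable def brLength (L : Set (ι → A)) (n : ℕ) : ℕ∞ :=
  modLength A
    (↥(MvPolynomial.homogeneousSubmodule ι A n) ⧸
      Submodule.comap (MvPolynomial.homogeneousSubmodule ι A n).subtype
        (Submodule.span A {p : MvPolynomial ι A | ∃ v : Fin n → (ι → A), (∀ j, v j ∈ L) ∧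
          p = ∏ j, ∑ i, MvPolynomial.C (v j i) * MvPolynomial.X i}))

/-- `e` is the Buchsbaum-Rim multiplicity of `F/M`, where `F` is free with basis
`ι` and `M` is the submodule whose elements have coordinate vectors `L`: if
`M = F` then `e = 0`; otherwise `λ_A(Symₙ(F)/Sₙ(M))` is eventually given by a
polynomial of degree `rk(F) + 1` and `e` is `(rk F + 1)!` times its leading
coefficient. -/
def IsBRMult (L : Set (ι → A)) (e : ℕ) : Prop :=
  (Submodule.span A L = ⊤ ∧ e = 0) ∨
  (Submodule.span A L ≠ ⊤ ∧ ∃ p : Polynomial ℚ,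
    p.degree = (Fintype.card ι + 1 : ℕ) ∧
    (∃ N : ℕ, ∀ n ≥ N, ∃ k : ℕ,
      brLength A ι L n = (k : ℕ∞) ∧ (k : ℚ) = p.eval (n : ℚ)) ∧
    (e : ℚ) = (Nat.factorial (Fintype.card ι + 1)) * p.leadingCoeff)

end BR


section MyHelpers
variable {A : Type*} [CommRing A]

lemma my_le_ordWrt_iff (mA I : Ideal A) (n : ℕ) : (n : ℕ∞) ≤ ordWrt mA I ↔ I ≤ mA ^ n := by
  constructor
  · intro h
    by_contra hn
    have hn0 : n ≠ 0 := by rintro rfl; simp at hn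
    have hb : ordWrt mA I ≤ ((n - 1 : ℕ) : ℕ∞) := by
      refine iSup₂_le fun k hk => ?_
      have hkn : k < n := by
        by_contra hk'
        exact hn (le_trans hk (Ideal.pow_le_pow_right (not_lt.1 hk')))
      exact_mod_cast Nat.le_sub_one_of_lt hkn
    have h2 : (n : ℕ∞) ≤ ((n - 1 : ℕ) : ℕ∞) := le_trans h hb
    have h3 : n ≤ n - 1 := by exact_mod_cast h2
    omega
  · intro h; exact le_iSup₂ (f := fun (n : ℕ) _ => (n : ℕ∞)) n h

lemma my_le_ordElemWrt_iff (mA : Ideal A) (a : A) (n : ℕ) :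
    (n : ℕ∞) ≤ ordElemWrt mA a ↔ a ∈ mA ^ n := by
  rw [ordElemWrt, my_le_ordWrt_iff, Ideal.span_singleton_le_iff_mem]

lemma my_ordWrt_anti (mA : Ideal A) {I J : Ideal A} (h : I ≤ J) : ordWrt mA J ≤ ordWrt mA I :=
  iSup₂_le fun n hn => (my_le_ordWrt_iff mA I n).2 (le_trans h hn)

lemma my_enat_eq_top {x : ℕ∞} (h : ∀ n : ℕ, (n : ℕ∞) ≤ x) : x = ⊤ := by
  cases x with
  | top => rfl
  | coe n => exact absurd (h (n + 1)) (by exact_mod_cast Nat.not_succ_le_self n)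

lemma my_ordElemWrt_zero (mA : Ideal A) : ordElemWrt mA (0 : A) = ⊤ :=
  my_enat_eq_top fun n => (my_le_ordElemWrt_iff mA 0 n).2 (zero_mem _)

lemma my_ordElemWrt_ne_top {R : Type*} [CommRing R] [IsNoetherianRing R] [IsLocalRing R]
    {a : R} (ha : a ≠ 0) : ordElemWrt (IsLocalRing.maximalIdeal R) a ≠ ⊤ := by
  intro h
  have hmem : ∀ n : ℕ, a ∈ IsLocalRing.maximalIdeal R ^ n := fun n =>
    (my_le_ordElemWrt_iff _ a n).1 (h ▸ le_top)
  have hbot := Ideal.iInf_pow_eq_bot_of_isLocalRing (I := IsLocalRing.maximalIdeal R)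
    (IsLocalRing.maximalIdeal.isMaximal R).ne_top
  have hmem2 : a ∈ (⨅ i : ℕ, IsLocalRing.maximalIdeal R ^ i) :=
    Submodule.mem_iInf _ |>.2 hmem
  rw [hbot] at hmem2
  exact ha (Submodule.mem_bot R |>.1 hmem2)

end MyHelpers

/-- Lemma 3.1. There is a free submodule `C ⊆ M` of rank `rk M`
with `CV ∩ F = MV ∩ F`, and `ord_R(det C) = ord_R(M)`. -/
theorem stmt_1    {R : Type*} [CommRing R] [IsDomain R] [IsNoetherianRing R] [IsLocalRing R]
    (hdim : ringKrullDim R = 2)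
    (hreg : ∃ x y : R, maximalIdeal R = Ideal.span {x, y})
    [Infinite (ResidueField R)]
    {K : Type*} [Field K] [Algebra R K] [IsFractionRing R K]
    {W : Type*} [AddCommGroup W] [Module K W] [Module R W] [IsScalarTower R K W]
    {M F : Submodule R W} (hMF : M ≤ F) (hfg : M.FG)
    {ι : Type*} [Fintype ι] [DecidableEq ι] (bF : Module.Basis ι R ↥F)
    (hspan : Submodule.span K (M : Set W) = ⊤)
    (hlen : IsFiniteLength R (↥F ⧸ Submodule.comap F.subtype M))
    {V : Subalgebra R K} (hV : IsOrderValRing R K V)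
 :
    ∃ C : Submodule R W, ∃ hCM : C ≤ M, ∃ c : Module.Basis ι R ↥C,
      vSpan R K W V C ⊓ F = vSpan R K W V M ⊓ F ∧
      ordElemWrt (maximalIdeal R) (detIn R W (hCM.trans hMF) c bF) =
        ordWrt (maximalIdeal R) (minorsIdeal R W hMF bF) := by
  classical
  let Amat : (ι → ↥M) → Matrix ι ι R :=
    fun u => Matrix.of fun i j => bF.repr ⟨(u j : W), hMF (u j).2⟩ i
  have key_repr : ∀ x : ↥F, (x : W) = ∑ i, bF.repr x i • ((bF i : ↥F) : W) := by
    intro x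
    conv_lhs => rw [← bF.sum_repr x]
    simp only [AddSubmonoidClass.coe_finset_sum, SetLike.val_smul]
  have sum_coord : ∀ (u : ι → ↥M) (t : ι → K),
      ∑ j, t j • ((u j : ↥M) : W)
        = ∑ i, (∑ j, algebraMap R K (Amat u i j) * t j) • ((bF i : ↥F) : W) := by
    intro u t
    have hrep : ∀ j, ((u j : ↥M) : W) = ∑ i, Amat u i j • ((bF i : ↥F) : W) := fun j =>
      key_repr ⟨(u j : W), hMF (u j).2⟩
    calc ∑ j, t j • ((u j : ↥M) : W)
        = ∑ j, ∑ i, (algebraMap R K (Amat u i j) * t j) • ((bF i : ↥F) : W) := by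
          refine Finset.sum_congr rfl fun j _ => ?_
          rw [hrep j, Finset.smul_sum]
          refine Finset.sum_congr rfl fun i _ => ?_
          rw [← algebraMap_smul K (Amat u i j) ((bF i : ↥F) : W), smul_smul, mul_comm]
      _ = ∑ i, (∑ j, algebraMap R K (Amat u i j) * t j) • ((bF i : ↥F) : W) := by
          rw [Finset.sum_comm]
          exact Finset.sum_congr rfl fun i _ => (Finset.sum_smul).symm
  -- existence of a family with nonzero determinant
  have exists_ne : ∃ u : ι → ↥M, (Amat u).det ≠ 0 := by
    have hliK : LinearIndependent K (fun i => ((bF i : ↥F) : W)) := by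
      rw [Fintype.linearIndependent_iff]
      intro g hg
      obtain ⟨b, hb⟩ := IsLocalization.exist_integer_multiples_of_finite (nonZeroDivisors R) g
      choose a ha using hb
      have hb0 : (b : R) ≠ 0 := nonZeroDivisors.ne_zero b.2
      have h0W : ∑ i, a i • ((bF i : ↥F) : W) = 0 := by
        have : ∀ i, a i • ((bF i : ↥F) : W) = (b : R) • (g i • ((bF i : ↥F) : W)) := by
          intro i
          rw [← algebraMap_smul K (a i) ((bF i : ↥F) : W), ha i, smul_assoc]
        rw [Finset.sum_congr rfl fun i _ => this i, ← Finset.smul_sum, hg, smul_zero]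
      have h0F : ∑ i, a i • bF i = (0 : ↥F) := by
        apply Subtype.coe_injective
        push_cast [AddSubmonoidClass.coe_finset_sum]
        simpa using h0W
      have ha0 : ∀ i, a i = 0 := by
        have := Fintype.linearIndependent_iff.1 bF.linearIndependent a h0F
        exact this
      intro i
      have : algebraMap R K (b : R) * g i = 0 := by
        rw [← Algebra.smul_def, ← ha i, ha0 i, map_zero]
      rcases mul_eq_zero.1 this with h | h
      · exact absurd (IsFractionRing.injective R K (by rw [h, map_zero])) hb0
      · exact h
    have hspK : ⊤ ≤ Submodule.span K (Set.range fun i => ((bF i : ↥F) : W)) := by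
      rw [← hspan]
      refine Submodule.span_le.2 fun w hw => ?_
      have hwF : w ∈ F := hMF hw
      have : w = ((⟨w, hwF⟩ : ↥F) : W) := rfl
      rw [this, key_repr ⟨w, hwF⟩]
      exact Submodule.sum_mem _ fun i _ =>
        Submodule.smul_of_tower_mem _ _ (Submodule.subset_span ⟨i, rfl⟩)
    let bK : Module.Basis ι K W := Module.Basis.mk hliK hspK
    obtain ⟨s, hsM, hsspan, hsli⟩ := exists_linearIndependent K (M : Set W)
    have hstop : ⊤ ≤ Submodule.span K (Set.range ((↑) : s → W)) := by
      rw [Subtype.range_coe, hsspan, hspan]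
    let bs : Module.Basis s K W := Module.Basis.mk hsli hstop
    let e : s ≃ ι := Module.Basis.indexEquiv bs bK
    refine ⟨fun i => ⟨((e.symm i : s) : W), hsM (e.symm i).2⟩, ?_⟩
    intro hdet
    have hliu : LinearIndependent K (fun i : ι => ((e.symm i : s) : W)) :=
      hsli.comp e.symm e.symm.injective
    set u₀ : ι → ↥M := fun i => ⟨((e.symm i : s) : W), hsM (e.symm i).2⟩ with hu₀
    have hdetK : ((Amat u₀).map (algebraMap R K)).det = 0 := by
      rw [← RingHom.mapMatrix_apply, ← RingHom.map_det, hdet, map_zero]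
    obtain ⟨l, hl0, hl⟩ := (Matrix.exists_mulVec_eq_zero_iff).2 hdetK
    have hsum : ∑ j, l j • ((u₀ j : ↥M) : W) = 0 := by
      rw [sum_coord]
      have hz : ∀ i, (∑ j, algebraMap R K (Amat u₀ i j) * l j) = 0 := by
        intro i
        have := congrFun hl i
        simpa [Matrix.mulVec, dotProduct, Matrix.map_apply] using this
      simp [hz]
    exact hl0 (funext (Fintype.linearIndependent_iff.1 hliu l hsum))
  -- choose a minimizer of the order of the determinant
  obtain ⟨N, hNS, hminlt⟩ := (wellFounded_lt (α := ℕ∞)).has_min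
    (Set.range fun u : ι → ↥M => ordElemWrt (maximalIdeal R) (Amat u).det)
    ⟨_, Set.mem_range_self (fun _ => (0 : ↥M))⟩
  obtain ⟨u, hu⟩ := hNS
  replace hu : ordElemWrt (maximalIdeal R) (Amat u).det = N := hu
  have hmin : ∀ u' : ι → ↥M, N ≤ ordElemWrt (maximalIdeal R) (Amat u').det := fun u' =>
    not_lt.1 (hminlt _ (Set.mem_range_self u'))
  obtain ⟨u₀, hu₀⟩ := exists_ne
  have hNtop : N ≠ ⊤ := fun h =>
    my_ordElemWrt_ne_top hu₀ (le_antisymm le_top (h ▸ hmin u₀))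
  have hd0 : (Amat u).det ≠ 0 := by
    intro h
    rw [h, my_ordElemWrt_zero] at hu
    exact hNtop hu.symm
  have halg : algebraMap R K (Amat u).det ≠ 0 := fun h =>
    hd0 (IsFractionRing.injective R K (by rw [h, map_zero]))
  -- Cramer's rule: every element of M is a V-combination of the u j
  have cram : ∀ w, w ∈ M → ∃ t : ι → K, (∀ j, t j ∈ V) ∧
      w = ∑ j, t j • ((u j : ↥M) : W) := by
    intro w hw
    set ρ : ι → R := fun i => bF.repr ⟨w, hMF hw⟩ i with hρ
    set cv : ι → R := Matrix.cramer (Amat u) ρ with hcv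
    have hcol : ∀ j, cv j = (Amat (Function.update u j ⟨w, hw⟩)).det := by
      intro j
      rw [hcv, Matrix.cramer_apply]
      congr 1
      funext i j'
      rcases eq_or_ne j' j with rfl | hne
      · simp [Matrix.updateCol_apply, Function.update_apply, Amat, hρ]
      · simp [Matrix.updateCol_apply, Function.update_apply, hne, Amat]
    refine ⟨fun j => algebraMap R K (cv j) * (algebraMap R K (Amat u).det)⁻¹, ?_, ?_⟩
    · intro j
      refine (hV _).2 ⟨cv j, (Amat u).det, hd0, ?_, ?_⟩
      · rw [mul_assoc, inv_mul_cancel₀ halg, mul_one]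
      · rw [hu, hcol j]
        exact hmin _
    · have hmv : Matrix.mulVec (Amat u) cv = (Amat u).det • ρ := Matrix.mulVec_cramer _ _
      have hcoef : ∀ i, (∑ j, algebraMap R K (Amat u i j) *
          (algebraMap R K (cv j) * (algebraMap R K (Amat u).det)⁻¹)) = algebraMap R K (ρ i) := by
        intro i
        have h1 : ∑ j, Amat u i j * cv j = (Amat u).det * ρ i := by
          have h2 := congrFun hmv i
          simpa [Matrix.mulVec, dotProduct] using h2
        calc ∑ j, algebraMap R K (Amat u i j) *
              (algebraMap R K (cv j) * (algebraMap R K (Amat u).det)⁻¹)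
            = (∑ j, algebraMap R K (Amat u i j * cv j)) * (algebraMap R K (Amat u).det)⁻¹ := by
              rw [Finset.sum_mul]
              exact Finset.sum_congr rfl fun j _ => by rw [map_mul, mul_assoc]
          _ = algebraMap R K ((Amat u).det * ρ i) * (algebraMap R K (Amat u).det)⁻¹ := by
              rw [← map_sum, h1]
          _ = algebraMap R K (ρ i) := by
              rw [map_mul, mul_comm (algebraMap R K (Amat u).det), mul_assoc,
                mul_inv_cancel₀ halg, mul_one]
      rw [sum_coord u]
      rw [Finset.sum_congr rfl fun i _ => by rw [hcoef i, algebraMap_smul]]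
      exact key_repr ⟨w, hMF hw⟩
  -- linear independence over R of the chosen family
  have hliR : LinearIndependent R (fun i => ((u i : ↥M) : W)) := by
    rw [Fintype.linearIndependent_iff]
    intro g hg
    have h1 : (∑ j, g j • (⟨((u j : ↥M) : W), hMF (u j).2⟩ : ↥F)) = (0 : ↥F) := by
      apply Subtype.coe_injective
      push_cast [AddSubmonoidClass.coe_finset_sum]
      simpa using hg
    have h2 : ∀ i', ∑ j, Amat u i' j * g j = 0 := by
      intro i'
      have h3 := congrArg (fun x : ↥F => bF.repr x i') h1
      simp only [map_sum, map_smul, Finsupp.coe_finset_sum, Finset.sum_apply,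
        Finsupp.smul_apply, smul_eq_mul, map_zero, Finsupp.coe_zero, Pi.zero_apply] at h3
      calc ∑ j, Amat u i' j * g j
          = ∑ j, g j * (bF.repr ⟨((u j : ↥M) : W), hMF (u j).2⟩) i' :=
            Finset.sum_congr rfl fun j _ => mul_comm _ _
        _ = 0 := h3
    have h5 : Matrix.mulVec (Amat u) g = 0 := by
      funext i'
      simpa [Matrix.mulVec, dotProduct] using h2 i'
    have h4 : (Amat u).det • g = 0 := by
      calc (Amat u).det • g = Matrix.mulVec ((Amat u).adjugate * Amat u) g := by
            rw [Matrix.adjugate_mul, Matrix.smul_mulVec, Matrix.one_mulVec]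
        _ = Matrix.mulVec (Amat u).adjugate (Matrix.mulVec (Amat u) g) := (Matrix.mulVec_mulVec _ _ _).symm
        _ = 0 := by rw [h5, Matrix.mulVec_zero]
    intro i
    have h6 := congrFun h4 i
    simp only [Pi.smul_apply, smul_eq_mul, Pi.zero_apply] at h6
    rcases mul_eq_zero.1 h6 with h | h
    · exact absurd h hd0
    · exact h
  have hCM : Submodule.span R (Set.range fun i => ((u i : ↥M) : W)) ≤ M :=
    Submodule.span_le.2 (by rintro _ ⟨i, rfl⟩; exact (u i).2)
  refine ⟨Submodule.span R (Set.range fun i => ((u i : ↥M) : W)), hCM, Module.Basis.span hliR, ?_, ?_⟩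
  · -- equality of V-spans
    have heq : vSpan R K W V (Submodule.span R (Set.range fun i => ((u i : ↥M) : W)))
        = vSpan R K W V M := by
      apply le_antisymm
      · refine Submodule.span_mono ?_
        rintro w ⟨t, ht, x, hx, rfl⟩
        exact ⟨t, ht, x, hCM hx, rfl⟩
      · refine Submodule.span_le.2 ?_
        rintro w ⟨t, ht, x, hx, rfl⟩
        obtain ⟨tt, htt, hxe⟩ := cram x hx
        rw [hxe, Finset.smul_sum]
        refine Submodule.sum_mem _ fun j _ => ?_
        rw [smul_smul]
        exact Submodule.subset_span
          ⟨t * tt j, V.mul_mem ht (htt j), _, Submodule.subset_span ⟨j, rfl⟩, rfl⟩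
    rw [heq]
  · -- equality of orders
    have hdet : detIn R W (hCM.trans hMF) (Module.Basis.span hliR) bF = (Amat u).det := by
      unfold detIn
      congr 1
      funext i j
      exact congrArg (fun x : ↥F => bF.repr x i) (Subtype.ext (by have h := congrArg Subtype.val (Module.Basis.span_apply hliR j); exact h))
    rw [hdet]
    lift N to ℕ using hNtop with n₀
    apply le_antisymm
    · rw [hu]
      apply (my_le_ordWrt_iff _ _ n₀).2
      unfold minorsIdeal
      refine Ideal.span_le.2 ?_
      rintro x ⟨v', rfl⟩
      exact (my_le_ordElemWrt_iff _ _ n₀).1 (hmin v')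
    · apply my_ordWrt_anti
      unfold minorsIdeal
      exact (Ideal.span_singleton_le_iff_mem _).2 (Ideal.subset_span ⟨u, rfl⟩)
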